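/- The matrices m1 = [[-3,5],[-2,3]] and m2 = [[0,√5],[-1/√5,0]] each normalize the subgroup Λ of PSL_2(R) generated by p1 = [[1,0],[1,1]], p2 = [[-1,5],[0,-1]], and p3 = [[-14,25],[-9,16]]. -/

import Mathlib

open Matrix

abbrev SL2R := Matrix.SpecialLinearGroup (Fin 2) ℝ

/-- `PSL₂(ℝ)`, the quotient of `SL₂(ℝ)` by its center `{±I}`. -/
abbrev PSL2R := SL2R ⧸ Subgroup.center SL2R

noncomputable def p1 : SL2R := ⟨!![1, 0; 1, 1], by norm_num [Matrix.det_fin_two_of]⟩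
noncomputable def p2 : SL2R := ⟨!![-1, 5; 0, -1], by norm_num [Matrix.det_fin_two_of]⟩
noncomputable def p3 : SL2R := ⟨!![-14, 25; -9, 16], by norm_num [Matrix.det_fin_two_of]⟩
noncomputable def m1 : SL2R := ⟨!![-3, 5; -2, 3], by norm_num [Matrix.det_fin_two_of]⟩
noncomputable def m2 : SL2R :=
  ⟨!![0, Real.sqrt 5; -(1 / Real.sqrt 5), 0], by
    have h5 : Real.sqrt 5 ≠ 0 := by positivity
    simp [Matrix.det_fin_two_of, h5]⟩

/-- The subgroup `Λ ≤ PSL₂(ℝ)` generated by (the images of) `p1`, `p2`, `p3`. -/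
noncomputable def Lambda : Subgroup PSL2R :=
  Subgroup.closure {(QuotientGroup.mk p1 : PSL2R), QuotientGroup.mk p2, QuotientGroup.mk p3}

noncomputable def negOne : SL2R := ⟨!![-1, 0; 0, -1], by norm_num [Matrix.det_fin_two_of]⟩

lemma negOne_mem_center : negOne ∈ Subgroup.center SL2R := by
  rw [Subgroup.mem_center_iff]
  intro g
  apply Subtype.ext
  rw [Matrix.SpecialLinearGroup.coe_mul, Matrix.SpecialLinearGroup.coe_mul]
  have hg : (g : Matrix (Fin 2) (Fin 2) ℝ) = !![g.1 0 0, g.1 0 1; g.1 1 0, g.1 1 1] := by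
    ext i j; fin_cases i <;> fin_cases j <;> rfl
  rw [hg]
  show _ * negOne.1 = negOne.1 * _
  simp only [negOne, Matrix.mul_fin_two]
  ring_nf

lemma mk_negOne : (QuotientGroup.mk negOne : PSL2R) = 1 :=
  (QuotientGroup.eq_one_iff _).mpr negOne_mem_center

lemma mk_neg_mul (A : SL2R) :
    (QuotientGroup.mk (negOne * A) : PSL2R) = QuotientGroup.mk A := by
  rw [QuotientGroup.mk_mul, mk_negOne, one_mul]

/-- If `n` is an involution and conjugates each generator into the closure, it normalizes. -/
lemma aux_normalizer {G : Type*} [Group G] (S : Set G) (n : G) (hn : n⁻¹ = n)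
    (hc : ∀ s ∈ S, n * s * n⁻¹ ∈ Subgroup.closure S) :
    n ∈ Subgroup.normalizer (Subgroup.closure S : Set G) := by
  have key : ∀ h ∈ Subgroup.closure S, n * h * n⁻¹ ∈ Subgroup.closure S := by
    intro h hh
    induction hh using Subgroup.closure_induction with
    | mem s hs => exact hc s hs
    | one => simpa using Subgroup.one_mem _
    | mul a b _ _ ha hb =>
      have : n * (a * b) * n⁻¹ = (n * a * n⁻¹) * (n * b * n⁻¹) := by group
      rw [this]; exact Subgroup.mul_mem _ ha hb
    | inv a _ ha =>
      have : n * a⁻¹ * n⁻¹ = (n * a * n⁻¹)⁻¹ := by group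
      rw [this]; exact Subgroup.inv_mem _ ha
  rw [Subgroup.mem_normalizer_iff]
  intro h
  constructor
  · exact key h
  · intro hh
    have h2 : n * n = 1 := by nth_rewrite 1 [← hn]; exact inv_mul_cancel n
    have := key _ hh
    have e : n * (n * h * n⁻¹) * n⁻¹ = h := by
      rw [hn]
      calc n * (n * h * n) * n = (n * n) * h * (n * n) := by noncomm_ring
        _ = h := by rw [h2]; group
    rwa [e] at this

lemma m1_sq : m1 * m1 = negOne := by
  apply Subtype.ext
  rw [Matrix.SpecialLinearGroup.coe_mul]
  show (!![-3,5;-2,3] : Matrix (Fin 2) (Fin 2) ℝ) * !![-3,5;-2,3] = !![-1,0;0,-1]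
  rw [Matrix.mul_fin_two]; norm_num

lemma hs5 : Real.sqrt 5 * Real.sqrt 5 = 5 := Real.mul_self_sqrt (by norm_num)
lemma hs0 : Real.sqrt 5 ≠ 0 := by positivity

lemma m2_sq : m2 * m2 = negOne := by
  apply Subtype.ext
  rw [Matrix.SpecialLinearGroup.coe_mul]
  show (!![0, Real.sqrt 5; -(1/Real.sqrt 5), 0] : Matrix (Fin 2) (Fin 2) ℝ) *
    !![0, Real.sqrt 5; -(1/Real.sqrt 5), 0] = !![-1,0;0,-1]
  rw [Matrix.mul_fin_two]
  ext i j
  fin_cases i <;> fin_cases j <;> (try simp) <;> (try field_simp)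

lemma c1 : m1 * p1 * m1⁻¹ = p3⁻¹ := by
  apply Subtype.ext
  rw [Matrix.SpecialLinearGroup.coe_mul, Matrix.SpecialLinearGroup.coe_mul,
    Matrix.SpecialLinearGroup.coe_inv, Matrix.SpecialLinearGroup.coe_inv]
  show (!![-3,5;-2,3] : Matrix (Fin 2) (Fin 2) ℝ) * !![1,0;1,1] * adjugate !![-3,5;-2,3]
    = adjugate !![-14,25;-9,16]
  rw [Matrix.adjugate_fin_two_of, Matrix.adjugate_fin_two_of, Matrix.mul_fin_two,
    Matrix.mul_fin_two]
  norm_num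

lemma c2 : m1 * p2 * m1⁻¹ = p3 * p2⁻¹ * p1⁻¹ := by
  apply Subtype.ext
  simp only [Matrix.SpecialLinearGroup.coe_mul, Matrix.SpecialLinearGroup.coe_inv]
  show (!![-3,5;-2,3] : Matrix (Fin 2) (Fin 2) ℝ) * !![-1,5;0,-1] * adjugate !![-3,5;-2,3]
    = !![-14,25;-9,16] * adjugate !![-1,5;0,-1] * adjugate !![1,0;1,1]
  simp only [Matrix.adjugate_fin_two_of, Matrix.mul_fin_two]
  norm_num

lemma c3 : m1 * p3 * m1⁻¹ = p1⁻¹ := by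
  apply Subtype.ext
  simp only [Matrix.SpecialLinearGroup.coe_mul, Matrix.SpecialLinearGroup.coe_inv]
  show (!![-3,5;-2,3] : Matrix (Fin 2) (Fin 2) ℝ) * !![-14,25;-9,16] * adjugate !![-3,5;-2,3]
    = adjugate !![1,0;1,1]
  simp only [Matrix.adjugate_fin_two_of, Matrix.mul_fin_two]
  norm_num

lemma c4 : m2 * p1 * m2⁻¹ = negOne * p2 := by
  apply Subtype.ext
  simp only [Matrix.SpecialLinearGroup.coe_mul, Matrix.SpecialLinearGroup.coe_inv]
  show (!![0, Real.sqrt 5; -(1/Real.sqrt 5), 0] : Matrix (Fin 2) (Fin 2) ℝ) * !![1,0;1,1] *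
      adjugate !![0, Real.sqrt 5; -(1/Real.sqrt 5), 0]
    = !![-1,0;0,-1] * !![-1,5;0,-1]
  simp only [Matrix.adjugate_fin_two_of, Matrix.mul_fin_two]
  ext i j
  fin_cases i <;> fin_cases j <;> (try simp) <;> (try field_simp) <;> nlinarith [hs5]

lemma c5 : m2 * p2 * m2⁻¹ = negOne * p1 := by
  apply Subtype.ext
  simp only [Matrix.SpecialLinearGroup.coe_mul, Matrix.SpecialLinearGroup.coe_inv]
  show (!![0, Real.sqrt 5; -(1/Real.sqrt 5), 0] : Matrix (Fin 2) (Fin 2) ℝ) * !![-1,5;0,-1] *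
      adjugate !![0, Real.sqrt 5; -(1/Real.sqrt 5), 0]
    = !![-1,0;0,-1] * !![1,0;1,1]
  simp only [Matrix.adjugate_fin_two_of, Matrix.mul_fin_two]
  ext i j
  fin_cases i <;> fin_cases j <;> (try simp) <;> (try field_simp) <;> nlinarith [hs5]

lemma c6 : m2 * p3 * m2⁻¹ = negOne * (p2 * p3⁻¹ * p1) := by
  apply Subtype.ext
  simp only [Matrix.SpecialLinearGroup.coe_mul, Matrix.SpecialLinearGroup.coe_inv]
  show (!![0, Real.sqrt 5; -(1/Real.sqrt 5), 0] : Matrix (Fin 2) (Fin 2) ℝ) * !![-14,25;-9,16] *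
      adjugate !![0, Real.sqrt 5; -(1/Real.sqrt 5), 0]
    = !![-1,0;0,-1] * (!![-1,5;0,-1] * adjugate !![-14,25;-9,16] * !![1,0;1,1])
  simp only [Matrix.adjugate_fin_two_of, Matrix.mul_fin_two]
  ext i j
  fin_cases i <;> fin_cases j <;> (try simp) <;> (try field_simp) <;> nlinarith [hs5]

theorem stmt7 :
    (QuotientGroup.mk m1 : PSL2R) ∈ Subgroup.normalizer (Lambda : Set PSL2R) ∧
    (QuotientGroup.mk m2 : PSL2R) ∈ Subgroup.normalizer (Lambda : Set PSL2R) := by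
  set S : Set PSL2R := {(QuotientGroup.mk p1 : PSL2R), QuotientGroup.mk p2, QuotientGroup.mk p3}
    with hS
  have hq1 : (QuotientGroup.mk p1 : PSL2R) ∈ Subgroup.closure S :=
    Subgroup.subset_closure (by simp [hS])
  have hq2 : (QuotientGroup.mk p2 : PSL2R) ∈ Subgroup.closure S :=
    Subgroup.subset_closure (by simp [hS])
  have hq3 : (QuotientGroup.mk p3 : PSL2R) ∈ Subgroup.closure S :=
    Subgroup.subset_closure (by simp [hS])
  have inv_self : ∀ m : SL2R, m * m = negOne → ((QuotientGroup.mk m : PSL2R))⁻¹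
      = QuotientGroup.mk m := by
    intro m hm
    have : (QuotientGroup.mk m : PSL2R) * QuotientGroup.mk m = 1 := by
      rw [← QuotientGroup.mk_mul, hm, mk_negOne]
    exact inv_eq_of_mul_eq_one_right this
  have conj_mk : ∀ m p w : SL2R, m * p * m⁻¹ = w →
      (QuotientGroup.mk m : PSL2R) * QuotientGroup.mk p * (QuotientGroup.mk m : PSL2R)⁻¹
        = QuotientGroup.mk w := by
    intro m p w h
    rw [← QuotientGroup.mk_inv, ← QuotientGroup.mk_mul, ← QuotientGroup.mk_mul, h]
  constructor
  · apply aux_normalizer S _ (inv_self m1 m1_sq)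
    intro s hs
    rcases hs with h | h | h <;> subst h
    · rw [conj_mk _ _ _ c1, QuotientGroup.mk_inv]
      exact Subgroup.inv_mem _ hq3
    · rw [conj_mk _ _ _ c2]
      simp only [QuotientGroup.mk_mul, QuotientGroup.mk_inv]
      exact Subgroup.mul_mem _ (Subgroup.mul_mem _ hq3 (Subgroup.inv_mem _ hq2))
        (Subgroup.inv_mem _ hq1)
    · rw [conj_mk _ _ _ c3, QuotientGroup.mk_inv]
      exact Subgroup.inv_mem _ hq1
  · apply aux_normalizer S _ (inv_self m2 m2_sq)
    intro s hs
    rcases hs with h | h | h <;> subst h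
    · rw [conj_mk _ _ _ c4, mk_neg_mul]
      exact hq2
    · rw [conj_mk _ _ _ c5, mk_neg_mul]
      exact hq1
    · rw [conj_mk _ _ _ c6, mk_neg_mul]
      simp only [QuotientGroup.mk_mul, QuotientGroup.mk_inv]
      exact Subgroup.mul_mem _ (Subgroup.mul_mem _ hq2 (Subgroup.inv_mem _ hq3)) hq1
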